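/- Stopping-process lemma for the constant step-size analysis: on a filtered probability space let (d_t) be a nonnegative adapted real-valued process satisfying E[d_{t+1}² | F_t] ≤ (1 − ηλ) d_t² + 2ε d_t + η² σ² almost surely for all t, where η, λ > 0 with ηλ < 1, ε ≥ 0, σ ≥ 0. Then liminf_{t→∞} d_t ≤ Δ almost surely, where Δ = (ε + √(ε² + λη³σ²))/(λη). -/

import Mathlib

open MeasureTheory Filter

/-- **Stopping-process lemma for the constant step-size analysis.**
If `(d_t)` is a nonnegative adapted process with
`E[d_{t+1}² | F_t] ≤ (1 − ηλ) d_t² + 2ε d_t + η² σ²` a.s. for all `t`, where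
`η, λ > 0`, `ηλ < 1`, `ε ≥ 0`, `σ ≥ 0`, then `liminf_{t→∞} d_t ≤ Δ` a.s., where
`Δ = (ε + √(ε² + λη³σ²))/(λη)`. -/
theorem polk_stopping_process
    {Ω : Type*} {m0 : MeasurableSpace Ω} (P : Measure Ω) [IsProbabilityMeasure P]
    (ℱ : Filtration ℕ m0)
    (d : ℕ → Ω → ℝ) (hd_nonneg : ∀ t ω, 0 ≤ d t ω)
    (hd_adapted : Adapted ℱ d)
    (hd_int : ∀ t, Integrable (fun ω => d t ω ^ 2) P)
    (η lam ε σ : ℝ) (hη : 0 < η) (hlam : 0 < lam) (hηlam : η * lam < 1)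
    (hε : 0 ≤ ε) (hσ : 0 ≤ σ)
    (hdescent : ∀ t, ∀ᵐ ω ∂P,
      (P[(fun ω' => d (t + 1) ω' ^ 2) | ℱ t]) ω
        ≤ (1 - η * lam) * d t ω ^ 2 + 2 * ε * d t ω + η ^ 2 * σ ^ 2) :
    ∀ᵐ ω ∂P, Filter.liminf (fun t => d t ω) atTop
      ≤ (ε + Real.sqrt (ε ^ 2 + lam * η ^ 3 * σ ^ 2)) / (lam * η) := by
  set s : ℝ := Real.sqrt (ε ^ 2 + lam * η ^ 3 * σ ^ 2) with hs_def
  have hs0 : 0 ≤ s := Real.sqrt_nonneg _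
  have hs2 : s ^ 2 = ε ^ 2 + lam * η ^ 3 * σ ^ 2 := Real.sq_sqrt (by positivity)
  set Δ : ℝ := (ε + s) / (lam * η) with hΔ_def
  clear_value Δ
  clear_value s
  have hΔeq : η * lam * Δ = ε + s := by
    rw [hΔ_def]; field_simp
  have hΔ0 : 0 ≤ Δ := by rw [hΔ_def]; exact div_nonneg (by linarith) (by positivity)
  -- the quadratic identity for the root Δ
  have hroot : η * lam * Δ ^ 2 - 2 * ε * Δ - η ^ 2 * σ ^ 2 = 0 := by
    have hne : η * lam ≠ 0 := by positivity
    have h1 : η * lam * (η * lam * Δ ^ 2 - 2 * ε * Δ - η ^ 2 * σ ^ 2)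
        = (η * lam * Δ) ^ 2 - 2 * ε * (η * lam * Δ) - η * lam * η ^ 2 * σ ^ 2 := by ring
    have h2 : (ε + s) ^ 2 - 2 * ε * (ε + s) - η * lam * η ^ 2 * σ ^ 2 = 0 := by
      nlinarith [hs2]
    have h3 : η * lam * (η * lam * Δ ^ 2 - 2 * ε * Δ - η ^ 2 * σ ^ 2) = 0 := by
      rw [h1, hΔeq]; linarith [h2]
    exact (mul_eq_zero.1 h3).resolve_left hne
  -- measurability and integrability of d t
  have hd_meas : ∀ t, Measurable (d t) := fun t =>
    ((hd_adapted t)).mono (ℱ.le t) le_rfl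
  have hd_int1 : ∀ t, Integrable (d t) P := by
    intro t
    refine Integrable.mono ((hd_int t).add (integrable_const 1))
      (hd_meas t).aestronglyMeasurable ?_
    refine Filter.Eventually.of_forall fun ω => ?_
    have h0 := hd_nonneg t ω
    simp only [Pi.add_apply, Real.norm_eq_abs]
    rw [abs_of_nonneg h0, abs_of_nonneg (by nlinarith : (0:ℝ) ≤ d t ω ^ 2 + 1)]
    nlinarith [sq_nonneg (d t ω - 1)]
  -- main claim : each tail event is null
  have key : ∀ δ : ℝ, 0 < δ → ∀ n : ℕ,
      P {ω | ∀ t, n ≤ t → Δ + δ ≤ d t ω} = 0 := by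
    intro δ hδ n
    set c : ℝ := η * lam * (Δ + δ) ^ 2 - 2 * ε * (Δ + δ) - η ^ 2 * σ ^ 2 with hc_def
    clear_value c
    have hceq : c = 2 * δ * s + η * lam * δ ^ 2 := by
      rw [hc_def]; linear_combination hroot + 2 * δ * hΔeq
    have hc0 : 0 < c := by
      rw [hceq]
      nlinarith [pow_pos hδ 2, mul_pos hη hlam, mul_nonneg hδ.le hs0]
    have hstep : ∀ x : ℝ, Δ + δ ≤ x →
        (1 - η * lam) * x ^ 2 + 2 * ε * x + η ^ 2 * σ ^ 2 ≤ x ^ 2 - c := by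
      intro x hx
      have hΔε : 2 * ε ≤ η * lam * (Δ + δ) + η * lam * x := by
        nlinarith [mul_pos (mul_pos hη hlam) hδ,
          mul_nonneg (mul_pos hη hlam).le (by linarith : (0:ℝ) ≤ x - Δ)]
      have hprod : 0 ≤ (x - (Δ + δ)) * (η * lam * (Δ + δ) + η * lam * x - 2 * ε) :=
        mul_nonneg (by linarith) (by linarith)
      rw [hc_def]
      nlinarith [hprod]
    set A : Set Ω := {ω | ∀ t, n ≤ t → Δ + δ ≤ d t ω} with hA_def
    set B : ℕ → Set Ω := fun T => {ω | ∀ t, n ≤ t → t ≤ T → Δ + δ ≤ d t ω} with hB_def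
    have hBmeasF : ∀ T, MeasurableSet[ℱ T] (B T) := by
      intro T
      have hBeq : B T = ⋂ (t : ℕ) (_ : t ∈ Set.Icc n T), d t ⁻¹' Set.Ici (Δ + δ) := by
        ext ω
        simp only [hB_def, Set.mem_setOf_eq, Set.mem_iInter, Set.mem_preimage,
          Set.mem_Ici, Set.mem_Icc]
        exact ⟨fun h t ht => h t ht.1 ht.2, fun h t h1 h2 => h t ⟨h1, h2⟩⟩
      rw [hBeq]
      refine MeasurableSet.biInter (Set.to_countable _) fun t ht => ?_
      exact ℱ.mono ht.2 _ ((hd_adapted t) measurableSet_Ici)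
    have hBmeas : ∀ T, MeasurableSet (B T) := fun T => ℱ.le T _ (hBmeasF T)
    have hAsub : ∀ T, A ⊆ B T := fun T ω hω t h1 _ => hω t h1
    have hBanti : ∀ T, B (T + 1) ⊆ B T := fun T ω hω t h1 h2 => hω t h1 (h2.trans (Nat.le_succ T))
    -- one-step integral inequality
    have main : ∀ T, n ≤ T →
        ∫ ω in B T, d (T + 1) ω ^ 2 ∂P
          ≤ (∫ ω in B T, d T ω ^ 2 ∂P) - c * (P (B T)).toReal := by
      intro T hT
      have h1 : ∫ ω in B T, d (T + 1) ω ^ 2 ∂P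
          = ∫ ω in B T, (P[(fun ω' => d (T + 1) ω' ^ 2) | ℱ T]) ω ∂P :=
        (setIntegral_condExp (ℱ.le T) (hd_int (T + 1)) (hBmeasF T)).symm
      rw [h1]
      have h2 : ∫ ω in B T, (P[(fun ω' => d (T + 1) ω' ^ 2) | ℱ T]) ω ∂P
          ≤ ∫ ω in B T, (d T ω ^ 2 - c) ∂P := by
        refine setIntegral_mono_ae_restrict
          integrable_condExp.integrableOn
          (((hd_int T).sub (integrable_const c)).integrableOn) ?_
        have hmem : ∀ᵐ ω ∂(P.restrict (B T)), ω ∈ B T :=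
          ae_restrict_mem (hBmeas T)
        filter_upwards [ae_restrict_of_ae (hdescent T), hmem] with ω hω hωB
        have hx : Δ + δ ≤ d T ω := hωB T hT le_rfl
        calc (P[(fun ω' => d (T + 1) ω' ^ 2) | ℱ T]) ω
            ≤ (1 - η * lam) * d T ω ^ 2 + 2 * ε * d T ω + η ^ 2 * σ ^ 2 := hω
          _ ≤ d T ω ^ 2 - c := hstep _ hx
      refine h2.trans (le_of_eq ?_)
      rw [integral_sub (hd_int T).integrableOn (integrable_const c).integrableOn,
        setIntegral_const, smul_eq_mul, mul_comm]
      rfl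
    -- chained inequality
    have chain : ∀ k : ℕ,
        (k : ℝ) * (c * (P A).toReal) + ∫ ω in B (n + k), d (n + k) ω ^ 2 ∂P
          ≤ ∫ ω in B n, d n ω ^ 2 ∂P := by
      intro k
      induction k with
      | zero => simp
      | succ k ih =>
        have hsub : B (n + (k + 1)) ⊆ B (n + k) := by
          have heq : n + (k + 1) = (n + k) + 1 := rfl
          rw [heq]; exact hBanti (n + k)
        have hmono : ∫ ω in B (n + (k + 1)), d (n + (k + 1)) ω ^ 2 ∂P
            ≤ ∫ ω in B (n + k), d (n + k + 1) ω ^ 2 ∂P := by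
          refine setIntegral_mono_set (hd_int _).integrableOn ?_
            (HasSubset.Subset.eventuallyLE hsub)
          exact Filter.Eventually.of_forall fun ω => sq_nonneg _
        have hPA : (P A).toReal ≤ (P (B (n + k))).toReal :=
          ENNReal.toReal_mono (measure_ne_top P _) (measure_mono (hAsub _))
        have h3 := main (n + k) (Nat.le_add_right n k)
        have h4 : ∫ ω in B (n + (k + 1)), d (n + (k + 1)) ω ^ 2 ∂P
            ≤ (∫ ω in B (n + k), d (n + k) ω ^ 2 ∂P) - c * (P A).toReal := by
          have h5 := mul_le_mul_of_nonneg_left hPA hc0.le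
          calc ∫ ω in B (n + (k + 1)), d (n + (k + 1)) ω ^ 2 ∂P
              ≤ ∫ ω in B (n + k), d (n + k + 1) ω ^ 2 ∂P := hmono
            _ ≤ (∫ ω in B (n + k), d (n + k) ω ^ 2 ∂P) - c * (P (B (n + k))).toReal := h3
            _ ≤ (∫ ω in B (n + k), d (n + k) ω ^ 2 ∂P) - c * (P A).toReal := by linarith
        push_cast
        linarith
    -- conclude P A = 0
    have hFnonneg : ∀ k : ℕ, 0 ≤ ∫ ω in B (n + k), d (n + k) ω ^ 2 ∂P := fun k =>
      integral_nonneg fun ω => sq_nonneg _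
    have hbound : ∀ k : ℕ, (k : ℝ) * (c * (P A).toReal) ≤ ∫ ω in B n, d n ω ^ 2 ∂P := by
      intro k
      have h6 := chain k
      have h7 := hFnonneg k
      linarith
    by_contra hPA
    have hPA' : 0 < (P A).toReal := ENNReal.toReal_pos hPA (measure_ne_top P _)
    have hpos : 0 < c * (P A).toReal := mul_pos hc0 hPA'
    obtain ⟨k, hk⟩ := exists_nat_gt ((∫ ω in B n, d n ω ^ 2 ∂P) / (c * (P A).toReal))
    have h8 := hbound k
    rw [div_lt_iff₀ hpos] at hk
    linarith
  -- combine over countably many δ and n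
  have hAbad : P (⋃ (m : ℕ) (n : ℕ),
      {ω | ∀ t, n ≤ t → Δ + 1 / (m + 1) ≤ d t ω}) = 0 := by
    refine measure_iUnion_null fun m => measure_iUnion_null fun n => ?_
    exact key (1 / (m + 1)) (by positivity) n
  refine ae_iff.2 (measure_mono_null ?_ hAbad)
  intro ω hω
  simp only [Set.mem_setOf_eq, not_le] at hω
  by_contra hωA
  simp only [Set.mem_iUnion, Set.mem_setOf_eq, not_exists] at hωA
  have hfreq : ∀ m : ℕ, liminf (fun t => d t ω) atTop ≤ Δ + 1 / (m + 1) := by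
    intro m
    have h1 : ∃ᶠ t in atTop, d t ω ≤ Δ + 1 / (m + 1) := by
      rw [frequently_atTop]
      intro n
      have h2 := hωA m n
      push_neg at h2
      obtain ⟨t, ht1, ht2⟩ := h2
      exact ⟨t, ht1, ht2.le⟩
    exact liminf_le_of_frequently_le h1
      ⟨0, eventually_map.2 (Filter.Eventually.of_forall fun t => hd_nonneg t ω)⟩
  have hlim : liminf (fun t => d t ω) atTop ≤ Δ := by
    by_contra hlt
    push_neg at hlt
    obtain ⟨m, hm⟩ := exists_nat_one_div_lt (sub_pos.2 hlt)
    have h9 := hfreq m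
    linarith [h9, hm]
  exact absurd hlim (not_le.2 hω)
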